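/- Fix a type {(m_k, n_{k+1}, r_{k+1})}. For a finite set of ordinals X, there exists a construction scheme over X if and only if |X| = m_k for some k; moreover, when it exists, the construction scheme over X is unique. -/

import Mathlib

open Set

/-- A *type* for construction schemes: a sequence `(m_k, n_{k+1}, r_{k+1})`. -/
structure CSType where
  m : ℕ → ℕ
  n : ℕ → ℕ
  r : ℕ → ℕ
  m_zero : m 0 = 1
  n_ge : ∀ k, 1 ≤ k → 2 ≤ n k
  r_inf : ∀ j N, ∃ k, N ≤ k ∧ 1 ≤ k ∧ r k = j
  r_lt : ∀ k, r (k + 1) < m k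
  m_rec : ∀ k, m (k + 1) = r (k + 1) + (m k - r (k + 1)) * n (k + 1)

/-- `C` is an initial segment of `A` (written `C ⊑ A` in the paper). -/
def InitSeg (C A : Finset Ordinal) : Prop :=
  C ⊆ A ∧ ∀ c ∈ C, ∀ d ∈ A, d ≤ c → d ∈ C

/-- `D` (with root `R`) is the canonical decomposition of `F`, an element of rank `k+1`,
into `n_{k+1}` elements of rank `k` forming a Δ-system with root `R` of size `r_{k+1}`,
with `R < D 0 \ R < ⋯ < D (n_{k+1} - 1) \ R`. -/
def CanonDecomp (τ : CSType) (𝓕 : Set (Finset Ordinal)) (k : ℕ)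
    (F : Finset Ordinal) (D : Fin (τ.n (k + 1)) → Finset Ordinal)
    (R : Finset Ordinal) : Prop :=
  (∀ i, D i ∈ 𝓕 ∧ (D i).card = τ.m k) ∧
  (∀ x, x ∈ F ↔ ∃ i, x ∈ D i) ∧
  R.card = τ.r (k + 1) ∧
  (∀ i j, i ≠ j → D i ∩ D j = R) ∧
  (∀ a ∈ R, ∀ i, ∀ b ∈ D i, b ∉ R → a < b) ∧
  (∀ i j : Fin (τ.n (k + 1)), i < j → ∀ b ∈ D i, b ∉ R → ∀ c ∈ D j, c ∉ R → b < c)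

/-- `𝓕` is a construction scheme over the set of ordinals `X` of type `τ`.
Rank is measured by cardinality: an element of rank `k` has cardinality `m_k`. -/
structure IsConstructionScheme (τ : CSType) (X : Set Ordinal)
    (𝓕 : Set (Finset Ordinal)) : Prop where
  subset_X : ∀ F ∈ 𝓕, (F : Set Ordinal) ⊆ X
  card_mem : ∀ F ∈ 𝓕, ∃ k, F.card = τ.m k
  cofinal : ∀ A : Finset Ordinal, (A : Set Ordinal) ⊆ X → ∃ F ∈ 𝓕, A ⊆ F
  initSeg : ∀ k, ∀ E ∈ 𝓕, ∀ F ∈ 𝓕, E.card = τ.m k → F.card = τ.m k →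
    InitSeg (E ∩ F) E
  decomp : ∀ k, ∀ F ∈ 𝓕, F.card = τ.m (k + 1) →
    ∃! D : Fin (τ.n (k + 1)) → Finset Ordinal, ∃ R, CanonDecomp τ 𝓕 k F D R

/-- `ρ(α,β)`: the least `k` such that some element of `𝓕` of rank `k` contains both. -/
noncomputable def csRho (τ : CSType) (𝓕 : Set (Finset Ordinal)) (α β : Ordinal) : ℕ :=
  sInf {k | ∃ F ∈ 𝓕, F.card = τ.m k ∧ α ∈ F ∧ β ∈ F}

/-- The `k`-closure `(β)_k = {α ≤ β | ρ(α,β) ≤ k}` (within `X`). -/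
def csClos (τ : CSType) (𝓕 : Set (Finset Ordinal)) (X : Set Ordinal)
    (k : ℕ) (β : Ordinal) : Set Ordinal :=
  {α ∈ X | α ≤ β ∧ csRho τ 𝓕 α β ≤ k}

/-- `Δ(α,β) = min({k | |(α)_k| ≠ |(β)_k|} ∪ {ω})`, valued in `ℕ∞` (where `⊤` plays
the role of `ω`). -/
noncomputable def csDelta (τ : CSType) (𝓕 : Set (Finset Ordinal)) (X : Set Ordinal)
    (α β : Ordinal) : ℕ∞ :=
  sInf ((fun k : ℕ => (k : ℕ∞)) ''
    {k | (csClos τ 𝓕 X k α).ncard ≠ (csClos τ 𝓕 X k β).ncard})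

/-- The function `Ξ_α : ω → ω ∪ {-1}` associated to a construction scheme. -/
noncomputable def csXi (τ : CSType) (𝓕 : Set (Finset Ordinal)) (X : Set Ordinal)
    (α : Ordinal) (k : ℕ) : ℤ :=
  if k = 0 then 0
  else if (csClos τ 𝓕 X k α).ncard ≤ τ.r k then -1
  else (((csClos τ 𝓕 X k α).ncard : ℤ) - ((csClos τ 𝓕 X (k - 1) α).ncard : ℤ)) /
    ((τ.m (k - 1) : ℤ) - (τ.r k : ℤ))

/-- `F` (of rank `k+1`) captures the pair `{α, β}`: with canonical decomposition
`D` and root `R`, `α ∈ D 0 \ R`, `β ∈ D 1 \ R`, and the increasing bijection from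
`D 0` to `D 1` sends `α` to `β`. -/
def CapturesPair (τ : CSType) (𝓕 : Set (Finset Ordinal)) (k : ℕ)
    (F : Finset Ordinal) (α β : Ordinal) : Prop :=
  F ∈ 𝓕 ∧ F.card = τ.m (k + 1) ∧
  ∃ D R, CanonDecomp τ 𝓕 k F D R ∧
    ∃ (h0 : 0 < τ.n (k + 1)) (h1 : 1 < τ.n (k + 1)),
      α ∈ D ⟨0, h0⟩ ∧ α ∉ R ∧ β ∈ D ⟨1, h1⟩ ∧ β ∉ R ∧
      ((D ⟨0, h0⟩ : Set Ordinal) ∩ Set.Iic α).ncard =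
        ((D ⟨1, h1⟩ : Set Ordinal) ∩ Set.Iic β).ncard

/-- `𝓕` is 2-capturing: for every uncountable `S ⊆ X` and every `k₀` there are a pair
`{α, β} ∈ [S]²` and `F ∈ 𝓕` of rank `l > k₀` capturing it. -/
def TwoCapturing (τ : CSType) (X : Set Ordinal) (𝓕 : Set (Finset Ordinal)) : Prop :=
  ∀ S : Set Ordinal, S ⊆ X → ¬ S.Countable → ∀ k₀ : ℕ,
    ∃ k, k₀ ≤ k ∧ ∃ F α β, α ∈ S ∧ β ∈ S ∧ α < β ∧ CapturesPair τ 𝓕 k F α β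

namespace CS
open Finset

lemma n_ge2 (τ : CSType) (k : ℕ) : 2 ≤ τ.n (k+1) := τ.n_ge (k+1) (by omega)

lemma m_lt_succ (τ : CSType) (k : ℕ) : τ.m k < τ.m (k+1) := by
  have h1 := τ.r_lt k
  have h2 := τ.m_rec k
  have h3 := n_ge2 τ k
  have h4 : (τ.m k - τ.r (k+1)) * 2 ≤ (τ.m k - τ.r (k+1)) * τ.n (k+1) :=
    Nat.mul_le_mul_left _ h3
  omega

lemma m_strictMono (τ : CSType) : StrictMono τ.m :=
  strictMono_nat_of_lt_succ (m_lt_succ τ)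

lemma m_pos (τ : CSType) (k : ℕ) : 1 ≤ τ.m k := by
  induction k with
  | zero => simp [τ.m_zero]
  | succ k ih => exact ih.trans (m_lt_succ τ k).le

end CS

open scoped Classical in
/-- position of `x` in `F`: number of elements of `F` below `x`. -/
noncomputable def posIn (F : Finset Ordinal) (x : Ordinal) : ℕ := (F.filter (· < x)).card

lemma posIn_lt_card {F : Finset Ordinal} {x : Ordinal} (hx : x ∈ F) : posIn F x < F.card := by
  classical
  apply Finset.card_lt_card
  refine ⟨Finset.filter_subset _ _, fun h => ?_⟩
  have := h hx
  simp at this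

lemma posIn_mono (F : Finset Ordinal) {x y : Ordinal} (h : x ≤ y) : posIn F x ≤ posIn F y := by
  classical
  apply Finset.card_le_card
  intro z hz
  simp only [Finset.mem_filter] at hz ⊢
  exact ⟨hz.1, lt_of_lt_of_le hz.2 h⟩

lemma posIn_strict {F : Finset Ordinal} {x y : Ordinal} (hx : x ∈ F) (h : x < y) :
    posIn F x < posIn F y := by
  classical
  apply Finset.card_lt_card
  constructor
  · intro z hz
    simp only [Finset.mem_filter] at hz ⊢
    exact ⟨hz.1, lt_trans hz.2 h⟩
  · intro hsub
    have := hsub (Finset.mem_filter.2 ⟨hx, h⟩)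
    simp at this

lemma lt_of_posIn_lt {F : Finset Ordinal} {x y : Ordinal} (hy : y ∈ F)
    (h : posIn F x < posIn F y) : x < y := by
  by_contra hc
  exact absurd (posIn_mono F (not_lt.1 hc)) (by omega)

lemma posIn_injOn {F : Finset Ordinal} {x y : Ordinal} (hx : x ∈ F) (hy : y ∈ F)
    (h : posIn F x = posIn F y) : x = y := by
  rcases lt_trichotomy x y with hl | he | hl
  · exact absurd (posIn_strict hx hl) (by omega)
  · exact he
  · exact absurd (posIn_strict hy hl) (by omega)

lemma posIn_orderEmbOfFin {F : Finset Ordinal} {N : ℕ} (h : F.card = N) (j : Fin N) :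
    posIn F (F.orderEmbOfFin h j) = j := by
  classical
  have heq : F.filter (· < F.orderEmbOfFin h j)
      = (Finset.univ.filter (fun j' : Fin N => j' < j)).image (F.orderEmbOfFin h) := by
    ext y
    simp only [Finset.mem_filter, Finset.mem_image, Finset.mem_univ, true_and]
    constructor
    · rintro ⟨hyF, hylt⟩
      have : y ∈ Set.range (F.orderEmbOfFin h) := by
        rw [Finset.range_orderEmbOfFin]; exact_mod_cast hyF
      obtain ⟨j', rfl⟩ := this
      exact ⟨j', (OrderEmbedding.lt_iff_lt _).1 hylt, rfl⟩
    · rintro ⟨j', hj', rfl⟩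
      exact ⟨Finset.orderEmbOfFin_mem F h j', (OrderEmbedding.lt_iff_lt _).2 hj'⟩
  rw [posIn, heq, Finset.card_image_of_injective _ (F.orderEmbOfFin h).injective]
  have : Finset.univ.filter (fun j' : Fin N => j' < j) = Finset.Iio j := by
    ext j'; simp
  rw [this, Fin.card_Iio]

lemma exists_posIn {F : Finset Ordinal} {N : ℕ} (h : F.card = N) {j : ℕ} (hj : j < N) :
    ∃ x ∈ F, posIn F x = j := by
  exact ⟨F.orderEmbOfFin h ⟨j, hj⟩, Finset.orderEmbOfFin_mem F h _,
    posIn_orderEmbOfFin h ⟨j, hj⟩⟩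

lemma card_filter_posIn (F : Finset Ordinal) {N : ℕ} (h : F.card = N) (p : ℕ → Prop)
    [DecidablePred p] (q : Ordinal → Prop) [DecidablePred q]
    (hq : ∀ x ∈ F, (q x ↔ p (posIn F x))) :
    (F.filter q).card = ((Finset.range N).filter p).card := by
  apply Finset.card_bij (fun (x : Ordinal) _ => posIn F x)
  · intro a ha
    simp only [Finset.mem_filter] at ha ⊢
    exact ⟨Finset.mem_range.2 (h ▸ posIn_lt_card ha.1), (hq a ha.1).1 ha.2⟩
  · intro a ha b hb hab
    simp only [Finset.mem_filter] at ha hb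
    exact posIn_injOn ha.1 hb.1 hab
  · intro b hb
    simp only [Finset.mem_filter, Finset.mem_range] at hb
    obtain ⟨x, hxF, hpos⟩ := exists_posIn h hb.1
    exact ⟨x, Finset.mem_filter.2 ⟨hxF, (hq x hxF).2 (hpos ▸ hb.2)⟩, hpos⟩

/-- the index-condition for membership in the `i`-th canonical child. -/
def childP (τ : CSType) (k i j : ℕ) : Prop :=
  j < τ.r (k+1) ∨ (τ.r (k+1) + i * (τ.m k - τ.r (k+1)) ≤ j ∧
    j < τ.r (k+1) + (i+1) * (τ.m k - τ.r (k+1)))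

open scoped Classical in
/-- the `i`-th canonical child of `F` (of rank `k+1`). -/
noncomputable def child (τ : CSType) (k : ℕ) (F : Finset Ordinal) (i : ℕ) : Finset Ordinal :=
  F.filter (fun x => childP τ k i (posIn F x))

open scoped Classical in
/-- the canonical root of `F` (of rank `k+1`). -/
noncomputable def root (τ : CSType) (k : ℕ) (F : Finset Ordinal) : Finset Ordinal :=
  F.filter (fun x => posIn F x < τ.r (k+1))

lemma mem_child {τ : CSType} {k : ℕ} {F : Finset Ordinal} {i : ℕ} {x : Ordinal} :
    x ∈ child τ k F i ↔ x ∈ F ∧ childP τ k i (posIn F x) := by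
  classical simp [child]

lemma mem_root {τ : CSType} {k : ℕ} {F : Finset Ordinal} {x : Ordinal} :
    x ∈ root τ k F ↔ x ∈ F ∧ posIn F x < τ.r (k+1) := by
  classical simp [root]

lemma child_subset {τ : CSType} {k : ℕ} {F : Finset Ordinal} {i : ℕ} :
    child τ k F i ⊆ F := fun x hx => (mem_child.1 hx).1

lemma root_subset_child {τ : CSType} {k : ℕ} {F : Finset Ordinal} {i : ℕ} :
    root τ k F ⊆ child τ k F i := by
  intro x hx
  rw [mem_root] at hx
  exact mem_child.2 ⟨hx.1, Or.inl hx.2⟩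

/-- block-interval disjointness -/
lemma childP_det {τ : CSType} {k i i' j : ℕ} (h : childP τ k i j) (h' : childP τ k i' j)
    (hj : ¬ j < τ.r (k+1)) : i = i' := by
  rcases h with h | h; · exact absurd h hj
  rcases h' with h' | h'; · exact absurd h' hj
  by_contra hne
  rcases Nat.lt_or_ge i i' with hlt | hge
  · have : (i+1) * (τ.m k - τ.r (k+1)) ≤ i' * (τ.m k - τ.r (k+1)) :=
      Nat.mul_le_mul_right _ hlt
    omega
  · have hlt : i' < i := by omega
    have : (i'+1) * (τ.m k - τ.r (k+1)) ≤ i * (τ.m k - τ.r (k+1)) :=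
      Nat.mul_le_mul_right _ hlt
    omega


section cards
variable {τ : CSType} {k : ℕ} {F : Finset Ordinal}

lemma card_root (hF : F.card = τ.m (k+1)) : (root τ k F).card = τ.r (k+1) := by
  classical
  have h0 : (root τ k F).card
      = ((Finset.range (τ.m (k+1))).filter (fun j => j < τ.r (k+1))).card :=
    card_filter_posIn F hF (fun j => j < τ.r (k+1)) _ (fun x _ => Iff.rfl)
  rw [h0]
  have h1 : (Finset.range (τ.m (k+1))).filter (fun j => j < τ.r (k+1))
      = Finset.range (τ.r (k+1)) := by
    ext j
    simp only [Finset.mem_filter, Finset.mem_range]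
    have h2 := τ.r_lt k
    have h3 := CS.m_lt_succ τ k
    omega
  rw [h1, Finset.card_range]

lemma card_child (hF : F.card = τ.m (k+1)) {i : ℕ} (hi : i < τ.n (k+1)) :
    (child τ k F i).card = τ.m k := by
  classical
  have h0 : (child τ k F i).card
      = ((Finset.range (τ.m (k+1))).filter (fun j => childP τ k i j)).card :=
    card_filter_posIn F hF (fun j => childP τ k i j) _ (fun x _ => Iff.rfl)
  have hmr := τ.m_rec k
  have hrm := τ.r_lt k
  have e1 : (i+1) * (τ.m k - τ.r (k+1)) ≤ τ.n (k+1) * (τ.m k - τ.r (k+1)) :=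
    Nat.mul_le_mul_right _ hi
  have e2 : (τ.m k - τ.r (k+1)) * τ.n (k+1) = τ.n (k+1) * (τ.m k - τ.r (k+1)) :=
    Nat.mul_comm _ _
  have e3 : (i+1) * (τ.m k - τ.r (k+1)) = i * (τ.m k - τ.r (k+1)) + (τ.m k - τ.r (k+1)) := by
    ring
  have hsplit : (Finset.range (τ.m (k+1))).filter (fun j => childP τ k i j)
      = Finset.range (τ.r (k+1)) ∪
        Finset.Ico (τ.r (k+1) + i * (τ.m k - τ.r (k+1)))
          (τ.r (k+1) + (i+1) * (τ.m k - τ.r (k+1))) := by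
    ext j
    rw [Finset.mem_filter]
    simp only [Finset.mem_filter, Finset.mem_range, Finset.mem_union, Finset.mem_Ico, childP]
    omega
  rw [h0, hsplit, Finset.card_union_of_disjoint, Finset.card_range, Nat.card_Ico]
  · omega
  · rw [Finset.disjoint_left]
    intro j hj hj'
    simp only [Finset.mem_range] at hj
    simp only [Finset.mem_Ico] at hj'
    omega

lemma child_inter (hF : F.card = τ.m (k+1)) {i i' : ℕ} (hne : i ≠ i') :
    child τ k F i ∩ child τ k F i' = root τ k F := by
  ext x
  simp only [Finset.mem_inter, mem_child, mem_root]
  constructor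
  · rintro ⟨⟨hxF, h1⟩, ⟨_, h2⟩⟩
    refine ⟨hxF, ?_⟩
    by_contra hc
    exact hne (childP_det h1 h2 hc)
  · rintro ⟨hxF, h⟩
    exact ⟨⟨hxF, Or.inl h⟩, ⟨hxF, Or.inl h⟩⟩

lemma child_cover (hF : F.card = τ.m (k+1)) {x : Ordinal} (hx : x ∈ F) :
    ∃ i < τ.n (k+1), x ∈ child τ k F i := by
  have hplt : posIn F x < τ.m (k+1) := hF ▸ posIn_lt_card hx
  have hmr := τ.m_rec k
  have hrm := τ.r_lt k
  have hn := CS.n_ge2 τ k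
  have e2 : (τ.m k - τ.r (k+1)) * τ.n (k+1) = τ.n (k+1) * (τ.m k - τ.r (k+1)) :=
    Nat.mul_comm _ _
  by_cases hpr : posIn F x < τ.r (k+1)
  · exact ⟨0, by omega, mem_child.2 ⟨hx, Or.inl hpr⟩⟩
  · refine ⟨(posIn F x - τ.r (k+1)) / (τ.m k - τ.r (k+1)), ?_,
      mem_child.2 ⟨hx, Or.inr ⟨?_, ?_⟩⟩⟩
    · rw [Nat.div_lt_iff_lt_mul (by omega)]
      omega
    · have h1 : (posIn F x - τ.r (k+1)) / (τ.m k - τ.r (k+1)) * (τ.m k - τ.r (k+1))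
          ≤ posIn F x - τ.r (k+1) := Nat.div_mul_le_self _ _
      omega
    · have h2 := Nat.div_add_mod (posIn F x - τ.r (k+1)) (τ.m k - τ.r (k+1))
      have h3 : (posIn F x - τ.r (k+1)) % (τ.m k - τ.r (k+1)) < τ.m k - τ.r (k+1) :=
        Nat.mod_lt _ (by omega)
      have h4 : ((posIn F x - τ.r (k+1)) / (τ.m k - τ.r (k+1)) + 1) * (τ.m k - τ.r (k+1))
          = (posIn F x - τ.r (k+1)) / (τ.m k - τ.r (k+1)) * (τ.m k - τ.r (k+1))
            + (τ.m k - τ.r (k+1)) := by ring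
      have h5 : (posIn F x - τ.r (k+1)) / (τ.m k - τ.r (k+1)) * (τ.m k - τ.r (k+1))
          = (τ.m k - τ.r (k+1)) * ((posIn F x - τ.r (k+1)) / (τ.m k - τ.r (k+1))) :=
        Nat.mul_comm _ _
      omega

lemma root_lt {a b : Ordinal} (ha : a ∈ root τ k F) {i : ℕ}
    (hb : b ∈ child τ k F i) (hbr : b ∉ root τ k F) : a < b := by
  rw [mem_root] at ha
  rw [mem_child] at hb
  have hbr' : ¬ posIn F b < τ.r (k+1) := fun hc => hbr (mem_root.2 ⟨hb.1, hc⟩)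
  exact lt_of_posIn_lt hb.1 (by omega)

lemma blocks_lt {i i' : ℕ} (hii : i < i') {b c : Ordinal}
    (hb : b ∈ child τ k F i) (hbr : b ∉ root τ k F)
    (hc : c ∈ child τ k F i') (hcr : c ∉ root τ k F) : b < c := by
  rw [mem_child] at hb hc
  have hbr' : ¬ posIn F b < τ.r (k+1) := fun h => hbr (mem_root.2 ⟨hb.1, h⟩)
  have hcr' : ¬ posIn F c < τ.r (k+1) := fun h => hcr (mem_root.2 ⟨hc.1, h⟩)
  rcases hb.2 with h1 | h1; · exact absurd h1 hbr'
  rcases hc.2 with h2 | h2; · exact absurd h2 hcr'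
  have e1 : (i+1) * (τ.m k - τ.r (k+1)) ≤ i' * (τ.m k - τ.r (k+1)) :=
    Nat.mul_le_mul_right _ hii
  exact lt_of_posIn_lt hc.1 (by omega)

end cards

section det
variable {τ : CSType} {𝓕 : Set (Finset Ordinal)} {k : ℕ} {F : Finset Ordinal}
  {D : Fin (τ.n (k+1)) → Finset Ordinal} {R : Finset Ordinal}

/-- the canonical decomposition is combinatorially determined. -/
lemma decomp_det (h : CanonDecomp τ 𝓕 k F D R) (i : Fin (τ.n (k+1))) :
    D i = child τ k F (i : ℕ) ∧ R = root τ k F := by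
  classical
  obtain ⟨hmem, hcov, hR, hinter, hroot, hblocks⟩ := h
  have hn := CS.n_ge2 τ k
  have hrm := τ.r_lt k
  have hDsub : ∀ (j : Fin (τ.n (k+1))) x, x ∈ D j → x ∈ F :=
    fun j x hx => (hcov x).2 ⟨j, hx⟩
  have hRD : ∀ j : Fin (τ.n (k+1)), R ⊆ D j := by
    intro j
    by_cases hj : (j : ℕ) = 0
    · have hne : j ≠ ⟨1, by omega⟩ := by
        intro hc; rw [hc] at hj; simp at hj
      rw [← hinter j ⟨1, by omega⟩ hne]
      exact Finset.inter_subset_left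
    · have hne : j ≠ ⟨0, by omega⟩ := by
        intro hc; rw [hc] at hj; simp at hj
      rw [← hinter j ⟨0, by omega⟩ hne]
      exact Finset.inter_subset_left
  have hRF : R ⊆ F := (hRD ⟨0, by omega⟩).trans (fun x hx => hDsub _ x hx)
  have hsd : ∀ j : Fin (τ.n (k+1)), (D j \ R).card = τ.m k - τ.r (k+1) := by
    intro j
    rw [Finset.card_sdiff_of_subset (hRD j), (hmem j).2, hR]
  have hdisj : ∀ j j' : Fin (τ.n (k+1)), j ≠ j' → Disjoint (D j \ R) (D j' \ R) := by
    intro j j' hne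
    rw [Finset.disjoint_left]
    intro x hx hx'
    rw [Finset.mem_sdiff] at hx hx'
    exact hx.2 ((hinter j j' hne) ▸ Finset.mem_inter.2 ⟨hx.1, hx'.1⟩)
  -- characterization of R by positions
  have Rchar : ∀ x, (x ∈ R ↔ x ∈ F ∧ posIn F x < τ.r (k+1)) := by
    intro x
    constructor
    · intro hxR
      refine ⟨hRF hxR, ?_⟩
      have hsub : F.filter (· < x) ⊆ R.erase x := by
        intro y hy
        rw [Finset.mem_filter] at hy
        obtain ⟨jy, hjy⟩ := (hcov y).1 hy.1
        have hyR : y ∈ R := by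
          by_contra hyR
          exact absurd (hroot x hxR jy y hjy hyR) (not_lt.2 hy.2.le)
        exact Finset.mem_erase.2 ⟨fun hc => (lt_irrefl x) (hc ▸ hy.2), hyR⟩
      have h1 : posIn F x ≤ (R.erase x).card := Finset.card_le_card hsub
      have h2 : (R.erase x).card = R.card - 1 := Finset.card_erase_of_mem hxR
      have h3 : 1 ≤ R.card := Finset.card_pos.2 ⟨x, hxR⟩
      omega
    · rintro ⟨hxF, hpos⟩
      by_contra hxR
      obtain ⟨jx, hjx⟩ := (hcov x).1 hxF
      have hsub : R ⊆ F.filter (· < x) := by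
        intro a ha
        exact Finset.mem_filter.2 ⟨hRF ha, hroot a ha jx x hjx hxR⟩
      have := Finset.card_le_card hsub
      rw [hR] at this
      exact absurd this (by rw [posIn] at hpos; omega)
  -- position of non-root elements of `D j`
  have blockpos : ∀ (j : Fin (τ.n (k+1))) x, x ∈ D j → x ∉ R →
      τ.r (k+1) + (j : ℕ) * (τ.m k - τ.r (k+1)) ≤ posIn F x ∧
      posIn F x < τ.r (k+1) + ((j : ℕ)+1) * (τ.m k - τ.r (k+1)) := by
    intro j x hxD hxR
    have hxF : x ∈ F := hDsub j x hxD
    set g : ℕ → Finset Ordinal := fun j' =>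
      if h : j' < τ.n (k+1) then D ⟨j', h⟩ \ R else ∅ with hg
    have hAeq : F.filter (· < x)
        = (R ∪ (Finset.range (j : ℕ)).biUnion g) ∪ (D j \ R).filter (· < x) := by
      ext y
      simp only [Finset.mem_filter, Finset.mem_union, Finset.mem_biUnion, Finset.mem_range,
        Finset.mem_sdiff, hg]
      constructor
      · rintro ⟨hyF, hyx⟩
        by_cases hyR : y ∈ R
        · exact Or.inl (Or.inl hyR)
        · obtain ⟨jy, hjy⟩ := (hcov y).1 hyF
          rcases lt_trichotomy jy j with hlt | heq | hgt
          · refine Or.inl (Or.inr ⟨(jy : ℕ), hlt, ?_⟩)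
            rw [dif_pos jy.isLt]
            simpa using Finset.mem_sdiff.2 ⟨hjy, hyR⟩
          · exact Or.inr ⟨⟨heq ▸ hjy, hyR⟩, hyx⟩
          · exact absurd (hblocks j jy hgt x hxD hxR y hjy hyR) (not_lt.2 hyx.le)
      · rintro ((hyR | ⟨j', hj', hy⟩) | ⟨⟨hyD, hyR⟩, hyx⟩)
        · exact ⟨hRF hyR, hroot y hyR j x hxD hxR⟩
        · rw [dif_pos (hj'.trans j.isLt)] at hy
          rw [Finset.mem_sdiff] at hy
          refine ⟨hDsub _ y hy.1, hblocks ⟨j', hj'.trans j.isLt⟩ j ?_ y hy.1 hy.2 x hxD hxR⟩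
          exact Fin.mk_lt_of_lt_val hj'
        · exact ⟨hDsub j y hyD, hyx⟩
    have hd1 : Disjoint R ((Finset.range (j : ℕ)).biUnion g) := by
      rw [Finset.disjoint_right]
      intro y hy hyR
      rw [Finset.mem_biUnion] at hy
      obtain ⟨j', hj', hy⟩ := hy
      rw [Finset.mem_range] at hj'
      rw [hg] at hy
      simp only [dif_pos (hj'.trans j.isLt)] at hy
      exact (Finset.mem_sdiff.1 hy).2 hyR
    have hd2 : Disjoint (R ∪ (Finset.range (j : ℕ)).biUnion g) ((D j \ R).filter (· < x)) := by
      rw [Finset.disjoint_right]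
      intro y hy hy2
      rw [Finset.mem_filter, Finset.mem_sdiff] at hy
      rw [Finset.mem_union] at hy2
      rcases hy2 with hyR | hyB
      · exact hy.1.2 hyR
      · rw [Finset.mem_biUnion] at hyB
        obtain ⟨j', hj', hyB⟩ := hyB
        rw [Finset.mem_range] at hj'
        rw [hg] at hyB
        simp only [dif_pos (hj'.trans j.isLt)] at hyB
        have hne : (⟨j', hj'.trans j.isLt⟩ : Fin (τ.n (k+1))) ≠ j := by
          intro hc
          have : j' = (j : ℕ) := by rw [← hc]
          omega
        have := hdisj _ _ hne
        rw [Finset.disjoint_left] at this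
        exact this hyB (Finset.mem_sdiff.2 ⟨hy.1.1, hy.1.2⟩)
    have hcardB : ((Finset.range (j : ℕ)).biUnion g).card
        = (j : ℕ) * (τ.m k - τ.r (k+1)) := by
      rw [Finset.card_biUnion]
      · rw [Finset.sum_congr rfl (fun j' hj' => ?_), Finset.sum_const, Finset.card_range,
          smul_eq_mul]
        rw [Finset.mem_range] at hj'
        rw [hg]
        simp only [dif_pos (hj'.trans j.isLt)]
        exact hsd _
      · intro j' hj' j'' hj'' hne
        rw [Finset.mem_coe, Finset.mem_range] at hj' hj''
        rw [hg]
        simp only [Function.onFun, dif_pos (hj'.trans j.isLt), dif_pos (hj''.trans j.isLt)]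
        exact hdisj _ _ (by simp [Fin.ext_iff]; omega)
    have hcardC : ((D j \ R).filter (· < x)).card < τ.m k - τ.r (k+1) := by
      have hsub : (D j \ R).filter (· < x) ⊆ (D j \ R).erase x := by
        intro y hy
        rw [Finset.mem_filter] at hy
        exact Finset.mem_erase.2 ⟨fun hc => lt_irrefl x (hc ▸ hy.2), hy.1⟩
      have h1 := Finset.card_le_card hsub
      have h2 : ((D j \ R).erase x).card = (D j \ R).card - 1 :=
        Finset.card_erase_of_mem (Finset.mem_sdiff.2 ⟨hxD, hxR⟩)
      have h3 := hsd j
      omega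
    have hposx : posIn F x = τ.r (k+1) + (j : ℕ) * (τ.m k - τ.r (k+1))
        + ((D j \ R).filter (· < x)).card := by
      rw [posIn, hAeq, Finset.card_union_of_disjoint hd2, Finset.card_union_of_disjoint hd1,
        hR, hcardB]
    have he : ((j : ℕ)+1) * (τ.m k - τ.r (k+1))
        = (j : ℕ) * (τ.m k - τ.r (k+1)) + (τ.m k - τ.r (k+1)) := by ring
    omega
  -- conclusion
  have hRroot : R = root τ k F := by
    ext x
    rw [mem_root, Rchar]
  refine ⟨?_, hRroot⟩
  ext x
  rw [mem_child]
  constructor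
  · intro hxD
    have hxF : x ∈ F := hDsub i x hxD
    refine ⟨hxF, ?_⟩
    by_cases hxR : x ∈ R
    · exact Or.inl ((Rchar x).1 hxR).2
    · exact Or.inr (blockpos i x hxD hxR)
  · rintro ⟨hxF, hP⟩
    obtain ⟨jx, hjx⟩ := (hcov x).1 hxF
    by_cases hxR : x ∈ R
    · exact hRD i hxR
    · have hnr : ¬ posIn F x < τ.r (k+1) := fun hc => hxR ((Rchar x).2 ⟨hxF, hc⟩)
      have hP' : childP τ k (jx : ℕ) (posIn F x) := Or.inr (blockpos jx x hjx hxR)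
      have : (i : ℕ) = (jx : ℕ) := childP_det hP hP' hnr
      exact (Fin.ext this : i = jx) ▸ hjx
end det

/-- the canonical construction scheme over a finite set. -/
noncomputable def canon (τ : CSType) : ℕ → Finset Ordinal → Set (Finset Ordinal)
  | 0, Y => {Y}
  | (k+1), Y => {Y} ∪ ⋃ i ∈ Finset.range (τ.n (k+1)), canon τ k (child τ k Y i)

lemma mem_canon_succ {τ : CSType} {k : ℕ} {Y F : Finset Ordinal} :
    F ∈ canon τ (k+1) Y ↔ F = Y ∨ ∃ i < τ.n (k+1), F ∈ canon τ k (child τ k Y i) := by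
  simp [canon, Set.mem_iUnion]

lemma canon_self {τ : CSType} (k : ℕ) (Y : Finset Ordinal) : Y ∈ canon τ k Y := by
  cases k with
  | zero => exact rfl
  | succ k => exact mem_canon_succ.2 (Or.inl rfl)

lemma canon_subset {τ : CSType} : ∀ {k : ℕ} {Y F : Finset Ordinal},
    F ∈ canon τ k Y → F ⊆ Y := by
  intro k
  induction k with
  | zero => intro Y F hF; rw [hF]
  | succ k ih =>
    intro Y F hF
    rcases mem_canon_succ.1 hF with rfl | ⟨i, hi, hF⟩
    · exact subset_rfl
    · exact (ih hF).trans child_subset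

lemma canon_card {τ : CSType} : ∀ {k : ℕ} {Y F : Finset Ordinal},
    Y.card = τ.m k → F ∈ canon τ k Y → ∃ j ≤ k, F.card = τ.m j := by
  intro k
  induction k with
  | zero => intro Y F hY hF; exact ⟨0, le_refl 0, hF ▸ hY⟩
  | succ k ih =>
    intro Y F hY hF
    rcases mem_canon_succ.1 hF with rfl | ⟨i, hi, hF⟩
    · exact ⟨k+1, le_refl _, hY⟩
    · obtain ⟨j, hj, hcard⟩ := ih (card_child hY hi) hF
      exact ⟨j, hj.trans (Nat.le_succ k), hcard⟩

section equiv
universe u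
variable {τ : CSType}

lemma posIn_image {F : Finset Ordinal.{u}} {f : Ordinal.{u} → Ordinal.{u}}
    (hf : Set.InjOn f ↑F) (hmono : ∀ x ∈ F, ∀ y ∈ F, x < y → f x < f y)
    {x : Ordinal} (hx : x ∈ F) : posIn (F.image f) (f x) = posIn F x := by
  classical
  have hlt : ∀ y ∈ F, (f y < f x ↔ y < x) := by
    intro y hy
    constructor
    · intro h
      rcases lt_trichotomy y x with h' | h' | h'
      · exact h'
      · exact absurd h (h' ▸ lt_irrefl _)
      · exact absurd (hmono x hx y hy h') (not_lt.2 h.le)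
    · exact hmono y hy x hx
  have : (F.image f).filter (· < f x) = (F.filter (· < x)).image f := by
    ext y
    simp only [Finset.mem_filter, Finset.mem_image]
    constructor
    · rintro ⟨⟨z, hz, rfl⟩, hlt'⟩
      exact ⟨z, ⟨hz, (hlt z hz).1 hlt'⟩, rfl⟩
    · rintro ⟨z, ⟨hz1, hz2⟩, rfl⟩
      exact ⟨⟨z, hz1, rfl⟩, (hlt z hz1).2 hz2⟩
  rw [posIn, this, Finset.card_image_of_injOn (hf.mono (by
    intro z hz
    simp only [Finset.coe_filter, Set.mem_setOf_eq] at hz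
    exact hz.1))]
  rfl

lemma child_image {F : Finset Ordinal.{u}} {f : Ordinal.{u} → Ordinal.{u}}
    (hf : Set.InjOn f ↑F) (hmono : ∀ x ∈ F, ∀ y ∈ F, x < y → f x < f y)
    (k i : ℕ) : child τ k (F.image f) i = (child τ k F i).image f := by
  ext y
  simp only [mem_child, Finset.mem_image]
  constructor
  · rintro ⟨⟨z, hz, rfl⟩, hP⟩
    rw [posIn_image hf hmono hz] at hP
    exact ⟨z, ⟨hz, hP⟩, rfl⟩
  · rintro ⟨z, ⟨hz1, hz2⟩, rfl⟩
    exact ⟨⟨z, hz1, rfl⟩, (posIn_image hf hmono hz1) ▸ hz2⟩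

lemma canon_image : ∀ {k : ℕ} {Y F : Finset Ordinal.{u}} {f : Ordinal.{u} → Ordinal.{u}},
    Set.InjOn f ↑Y → (∀ x ∈ Y, ∀ y ∈ Y, x < y → f x < f y) →
    F ∈ canon τ k Y → F.image f ∈ canon τ k (Y.image f) := by
  intro k
  induction k with
  | zero =>
    intro Y F f hf hmono hF
    rw [hF]; exact rfl
  | succ k ih =>
    intro Y F f hf hmono hF
    rcases mem_canon_succ.1 hF with rfl | ⟨i, hi, hF⟩
    · exact mem_canon_succ.2 (Or.inl rfl)
    · refine mem_canon_succ.2 (Or.inr ⟨i, hi, ?_⟩)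
      rw [child_image hf hmono]
      have hsub : (child τ k Y i : Set Ordinal) ⊆ ↑Y := by
        exact_mod_cast Finset.coe_subset.2 child_subset
      exact ih (hf.mono hsub)
        (fun x hx y hy => hmono x (child_subset hx) y (child_subset hy)) hF

end equiv

lemma posIn_child_of_mem_root {τ : CSType} {k : ℕ} {Y : Finset Ordinal} {i : ℕ} {x : Ordinal}
    (hx : x ∈ root τ k Y) : posIn (child τ k Y i) x = posIn Y x := by
  classical
  have : (child τ k Y i).filter (· < x) = Y.filter (· < x) := by
    ext y
    simp only [Finset.mem_filter]
    constructor
    · rintro ⟨hy, hyx⟩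
      exact ⟨child_subset hy, hyx⟩
    · rintro ⟨hy, hyx⟩
      refine ⟨root_subset_child (mem_root.2 ⟨hy, ?_⟩), hyx⟩
      exact lt_trans (posIn_strict hy hyx) (mem_root.1 hx).2
  rw [posIn, posIn, this]

lemma coh {τ : CSType} : ∀ k : ℕ, ∀ Y : Finset Ordinal, Y.card = τ.m k →
    ∀ E ∈ canon τ k Y, ∀ F ∈ canon τ k Y, E.card = F.card →
    ∀ c ∈ E, c ∈ F → ∀ d ∈ E, d ≤ c → d ∈ F := by
  intro k
  induction k with
  | zero =>
    intro Y _ E hE F hF _ c _ _ d hd _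
    simp only [canon, Set.mem_singleton_iff] at hE hF
    subst hE; subst hF; exact hd
  | succ k ih =>
    intro Y hY E hE F hF hcard c hcE hcF d hdE hdc
    rcases mem_canon_succ.1 hE with rfl | ⟨i, hi, hE⟩
    · rcases mem_canon_succ.1 hF with rfl | ⟨i', hi', hF⟩
      · exact hdE
      · exfalso
        have h1 : F.card ≤ τ.m k :=
          (card_child hY hi') ▸ Finset.card_le_card (canon_subset hF)
        have h2 := CS.m_lt_succ τ k
        omega
    · rcases mem_canon_succ.1 hF with rfl | ⟨i', hi', hF⟩
      · exfalso
        have h1 : E.card ≤ τ.m k :=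
          (card_child hY hi) ▸ Finset.card_le_card (canon_subset hE)
        have h2 := CS.m_lt_succ τ k
        omega
      · by_cases hii : i = i'
        · subst hii
          exact ih _ (card_child hY hi) E hE F hF hcard c hcE hcF d hdE hdc
        · -- cross-child case
          classical
          have hci : (child τ k Y i).card = τ.m k := card_child hY hi
          have hcj : (child τ k Y i').card = τ.m k := card_child hY hi'
          have hcci : c ∈ child τ k Y i := canon_subset hE hcE
          have hccj : c ∈ child τ k Y i' := canon_subset hF hcF
          have hcroot : c ∈ root τ k Y := by
            rw [← child_inter hY hii]
            exact Finset.mem_inter.2 ⟨hcci, hccj⟩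
          have hdci : d ∈ child τ k Y i := canon_subset hE hdE
          have hdroot : d ∈ root τ k Y := by
            rw [mem_root] at hcroot ⊢
            exact ⟨child_subset hdci,
              lt_of_le_of_lt (posIn_mono Y hdc) hcroot.2⟩
          set e' := (child τ k Y i').orderEmbOfFin hcj with he'
          set f : Ordinal → Ordinal := fun x =>
            if hx : x ∈ child τ k Y i then e' ⟨posIn (child τ k Y i) x,
              hci ▸ posIn_lt_card hx⟩ else x with hf
          have hfval : ∀ x (hx : x ∈ child τ k Y i),
              f x = e' ⟨posIn (child τ k Y i) x, hci ▸ posIn_lt_card hx⟩ := by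
            intro x hx; rw [hf]; exact dif_pos hx
          have hfmono : ∀ x ∈ child τ k Y i, ∀ y ∈ child τ k Y i, x < y → f x < f y := by
            intro x hx y hy hxy
            rw [hfval x hx, hfval y hy]
            exact e'.strictMono (by
              simp only [Fin.mk_lt_mk]
              exact posIn_strict hx hxy)
          have hfinj : Set.InjOn f ↑(child τ k Y i) := by
            intro x hx y hy hfxy
            rw [Finset.mem_coe] at hx hy
            rcases lt_trichotomy x y with h | h | h
            · exact absurd hfxy (ne_of_lt (hfmono x hx y hy h))
            · exact h
            · exact absurd hfxy.symm (ne_of_lt (hfmono y hy x hx h))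
          have hfmem : ∀ x ∈ child τ k Y i, f x ∈ child τ k Y i' := by
            intro x hx
            rw [hfval x hx]
            exact Finset.orderEmbOfFin_mem _ hcj _
          have himg : (child τ k Y i).image f = child τ k Y i' := by
            apply Finset.eq_of_subset_of_card_le
            · intro y hy
              obtain ⟨x, hx, rfl⟩ := Finset.mem_image.1 hy
              exact hfmem x hx
            · rw [Finset.card_image_of_injOn hfinj, hci, hcj]
          have hfix : ∀ x ∈ root τ k Y, f x = x := by
            intro x hx
            have hxi : x ∈ child τ k Y i := root_subset_child hx
            have hxj : x ∈ child τ k Y i' := root_subset_child hx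
            rw [hfval x hxi]
            apply posIn_injOn (F := child τ k Y i') (Finset.orderEmbOfFin_mem _ hcj _) hxj
            rw [posIn_orderEmbOfFin hcj]
            simp only
            rw [posIn_child_of_mem_root hx, posIn_child_of_mem_root hx]
          have hE' : E.image f ∈ canon τ k (child τ k Y i') := by
            rw [← himg]
            exact canon_image hfinj hfmono hE
          have hcardE' : (E.image f).card = F.card := by
            rw [Finset.card_image_of_injOn (hfinj.mono (by
              exact_mod_cast Finset.coe_subset.2 (canon_subset hE)))]
            exact hcard
          have hcE' : c ∈ E.image f :=
            Finset.mem_image.2 ⟨c, hcE, hfix c hcroot⟩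
          have hdE' : d ∈ E.image f :=
            Finset.mem_image.2 ⟨d, hdE, hfix d hdroot⟩
          exact ih _ hcj (E.image f) hE' F hF hcardE' c hcE' hcF d hdE' hdc

lemma rank_mem {τ : CSType} : ∀ k : ℕ, ∀ Y : Finset Ordinal, Y.card = τ.m k →
    ∀ j ≤ k, ∀ b ∈ Y, ∃ E ∈ canon τ k Y, E.card = τ.m j ∧ b ∈ E := by
  intro k
  induction k with
  | zero =>
    intro Y hY j hj b hb
    interval_cases j
    exact ⟨Y, canon_self 0 Y, hY, hb⟩
  | succ k ih =>
    intro Y hY j hj b hb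
    rcases Nat.lt_or_ge j (k+1) with hjk | hjk
    · obtain ⟨i, hi, hbi⟩ := child_cover hY hb
      obtain ⟨E, hE, hEcard, hbE⟩ := ih _ (card_child hY hi) j (by omega) b hbi
      exact ⟨E, mem_canon_succ.2 (Or.inr ⟨i, hi, hE⟩), hEcard, hbE⟩
    · have : j = k+1 := by omega
      subst this
      exact ⟨Y, canon_self _ Y, hY, hb⟩

lemma canon_trans {τ : CSType} : ∀ k : ℕ, ∀ Y : Finset Ordinal, Y.card = τ.m k →
    ∀ F l, F ∈ canon τ k Y → F.card = τ.m l → canon τ l F ⊆ canon τ k Y := by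
  intro k
  induction k with
  | zero =>
    intro Y hY F l hF hFl
    simp only [canon, Set.mem_singleton_iff] at hF
    subst hF
    have : l = 0 := by
      have := (CS.m_strictMono τ).injective (hFl.symm.trans hY)
      omega
    subst this
    exact subset_rfl
  | succ k ih =>
    intro Y hY F l hF hFl
    rcases mem_canon_succ.1 hF with rfl | ⟨i, hi, hF⟩
    · have : l = k+1 := (CS.m_strictMono τ).injective (hFl.symm.trans hY)
      subst this
      exact subset_rfl
    · intro G hG
      exact mem_canon_succ.2 (Or.inr ⟨i, hi, ih _ (card_child hY hi) F l hF hFl hG⟩)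

/-- the canonical decomposition of a member of rank `k+1` of the canonical scheme. -/
lemma canon_decomp_exists {τ : CSType} {𝓕 : Set (Finset Ordinal)} {j : ℕ}
    {F : Finset Ordinal} (hFc : F.card = τ.m (j+1))
    (hchild : ∀ i : Fin (τ.n (j+1)), child τ j F (i : ℕ) ∈ 𝓕) :
    CanonDecomp τ 𝓕 j F (fun i : Fin (τ.n (j+1)) => child τ j F (i : ℕ)) (root τ j F) := by
  refine ⟨fun i => ⟨hchild i, card_child hFc i.isLt⟩, ?_, card_root hFc, ?_, ?_, ?_⟩
  · intro x
    constructor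
    · intro hx
      obtain ⟨i, hi, hxi⟩ := child_cover hFc hx
      exact ⟨⟨i, hi⟩, hxi⟩
    · rintro ⟨i, hxi⟩
      exact child_subset hxi
  · intro i i' hne
    exact child_inter hFc (fun hc => hne (Fin.ext hc))
  · intro a ha i b hb hbr
    exact root_lt ha hb hbr
  · intro i i' hii b hb hbr c hc hcr
    exact blocks_lt (by exact_mod_cast hii) hb hbr hc hcr

theorem canon_scheme {τ : CSType} {k : ℕ} {X : Finset Ordinal} (hX : X.card = τ.m k) :
    IsConstructionScheme τ (X : Set Ordinal) (canon τ k X) := by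
  constructor
  · intro F hF
    exact_mod_cast Finset.coe_subset.2 (canon_subset hF)
  · intro F hF
    obtain ⟨j, _, hj⟩ := canon_card hX hF
    exact ⟨j, hj⟩
  · intro A hA
    exact ⟨X, canon_self k X, Finset.coe_subset.1 hA⟩
  · intro j E hE F hF hEc hFc
    refine ⟨Finset.inter_subset_left, ?_⟩
    intro c hc d hd hdc
    rw [Finset.mem_inter] at hc ⊢
    exact ⟨hd, coh k X hX E hE F hF (hEc.trans hFc.symm) c hc.1 hc.2 d hd hdc⟩
  · intro j F hF hFc
    have hchild : ∀ i : Fin (τ.n (j+1)), child τ j F (i : ℕ) ∈ canon τ k X := by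
      intro i
      apply canon_trans k X hX F (j+1) hF hFc
      exact mem_canon_succ.2 (Or.inr ⟨(i : ℕ), i.isLt, canon_self _ _⟩)
    refine ⟨fun i : Fin (τ.n (j+1)) => child τ j F (i : ℕ),
      ⟨root τ j F, canon_decomp_exists hFc hchild⟩, ?_⟩
    rintro D ⟨R, hD⟩
    funext i
    exact (decomp_det hD i).1

lemma X_mem_scheme {τ : CSType} {X : Finset Ordinal} {𝓕 : Set (Finset Ordinal)}
    (h : IsConstructionScheme τ (X : Set Ordinal) 𝓕) : X ∈ 𝓕 := by
  obtain ⟨F, hF, hXF⟩ := h.cofinal X subset_rfl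
  have hFX : F ⊆ X := Finset.coe_subset.1 (h.subset_X F hF)
  rwa [Finset.Subset.antisymm hFX hXF] at hF

/-- restriction of a scheme to a member. -/
lemma scheme_restrict {τ : CSType} {X : Finset Ordinal} {𝓕 : Set (Finset Ordinal)}
    (h : IsConstructionScheme τ (X : Set Ordinal) 𝓕) {Z : Finset Ordinal} (hZ : Z ∈ 𝓕) :
    IsConstructionScheme τ (Z : Set Ordinal) {G | G ∈ 𝓕 ∧ G ⊆ Z} := by
  constructor
  · rintro F ⟨_, hFZ⟩
    exact_mod_cast Finset.coe_subset.2 hFZ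
  · rintro F ⟨hF, _⟩
    exact h.card_mem F hF
  · intro A hA
    exact ⟨Z, ⟨hZ, subset_rfl⟩, Finset.coe_subset.1 hA⟩
  · rintro j E ⟨hE, _⟩ F ⟨hF, _⟩ hEc hFc
    exact h.initSeg j E hE F hF hEc hFc
  · rintro j F ⟨hF, hFZ⟩ hFc
    obtain ⟨D, ⟨R, hD⟩, huniq⟩ := h.decomp j F hF hFc
    have hDF : ∀ i, D i ⊆ F := by
      intro i x hx
      exact (hD.2.1 x).2 ⟨i, hx⟩
    refine ⟨D, ⟨R, ?_⟩, ?_⟩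
    · obtain ⟨h1, h2, h3, h4, h5, h6⟩ := hD
      exact ⟨fun i => ⟨⟨(h1 i).1, (hDF i).trans hFZ⟩, (h1 i).2⟩, h2, h3, h4, h5, h6⟩
    · rintro D' ⟨R', hD'⟩
      apply huniq
      obtain ⟨h1, h2, h3, h4, h5, h6⟩ := hD'
      exact ⟨R', ⟨fun i => ⟨(h1 i).1.1, (h1 i).2⟩, h2, h3, h4, h5, h6⟩⟩

theorem scheme_eq_canon {τ : CSType} : ∀ k : ℕ, ∀ X : Finset Ordinal,
    ∀ 𝓕 : Set (Finset Ordinal), X.card = τ.m k →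
    IsConstructionScheme τ (X : Set Ordinal) 𝓕 → 𝓕 = canon τ k X := by
  intro k
  induction k with
  | zero =>
    intro X 𝓕 hX h
    have hX𝓕 := X_mem_scheme h
    ext F
    simp only [canon, Set.mem_singleton_iff]
    constructor
    · intro hF
      obtain ⟨j, hj⟩ := h.card_mem F hF
      have hFX : F ⊆ X := Finset.coe_subset.1 (h.subset_X F hF)
      apply Finset.eq_of_subset_of_card_le hFX
      rw [hX, τ.m_zero, hj]
      exact CS.m_pos τ j
    · rintro rfl
      exact hX𝓕
  | succ k ih =>
    intro X 𝓕 hX h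
    have hX𝓕 := X_mem_scheme h
    obtain ⟨D, ⟨R, hD⟩, _⟩ := h.decomp k X hX𝓕 hX
    have hchild𝓕 : ∀ i : ℕ, i < τ.n (k+1) → child τ k X i ∈ 𝓕 := by
      intro i hi
      have := (hD.1 ⟨i, hi⟩).1
      rwa [(decomp_det hD ⟨i, hi⟩).1] at this
    have hsub : ∀ i : ℕ, i < τ.n (k+1) →
        {G | G ∈ 𝓕 ∧ G ⊆ child τ k X i} = canon τ k (child τ k X i) := by
      intro i hi
      exact ih (child τ k X i) _ (card_child hX hi) (scheme_restrict h (hchild𝓕 i hi))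
    ext F
    rw [mem_canon_succ]
    constructor
    · intro hF
      obtain ⟨j, hj⟩ := h.card_mem F hF
      have hFX : F ⊆ X := Finset.coe_subset.1 (h.subset_X F hF)
      have hjk : j ≤ k + 1 := by
        have h1 : τ.m j ≤ τ.m (k+1) := by
          rw [← hj, ← hX]; exact Finset.card_le_card hFX
        exact (CS.m_strictMono τ).le_iff_le.1 h1
      rcases Nat.lt_or_ge j (k+1) with hjk' | hjk'
      · right
        -- F is contained in some child
        have hFne : F.Nonempty := by
          rw [← Finset.card_pos, hj]
          exact CS.m_pos τ j
        obtain ⟨i, hi, hbi⟩ := child_cover hX (hFX (F.max'_mem hFne))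
        refine ⟨i, hi, ?_⟩
        obtain ⟨E, hE, hEc, hbE⟩ :=
          rank_mem k (child τ k X i) (card_child hX hi) j (by omega) (F.max' hFne) hbi
        have hE𝓕 : E ∈ 𝓕 := by
          have : E ∈ {G | G ∈ 𝓕 ∧ G ⊆ child τ k X i} := by
            rw [hsub i hi]; exact hE
          exact this.1
        have hFi : F ⊆ child τ k X i := by
          intro x hx
          have hIS := h.initSeg j F hF E hE𝓕 hj hEc
          have : x ∈ F ∩ E := hIS.2 (F.max' hFne) (Finset.mem_inter.2 ⟨F.max'_mem hFne, hbE⟩)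
            x hx (F.le_max' x hx)
          exact canon_subset hE (Finset.mem_inter.1 this).2
        have : F ∈ {G | G ∈ 𝓕 ∧ G ⊆ child τ k X i} := ⟨hF, hFi⟩
        rwa [hsub i hi] at this
      · left
        have hjeq : j = k+1 := by omega
        apply Finset.eq_of_subset_of_card_le hFX
        rw [hX, hj, hjeq]
    · rintro (rfl | ⟨i, hi, hF⟩)
      · exact hX𝓕
      · have : F ∈ {G | G ∈ 𝓕 ∧ G ⊆ child τ k X i} := by
          rw [hsub i hi]; exact hF
        exact this.1


/-- For a finite set of ordinals `X`, there is a construction scheme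
over `X` iff `|X| = m_k` for some `k`; moreover it is unique when it exists. -/
theorem stmt4 (τ : CSType) (X : Finset Ordinal) :
    ((∃ 𝓕, IsConstructionScheme τ (X : Set Ordinal) 𝓕) ↔ ∃ k, X.card = τ.m k) ∧
    (∀ 𝓕 𝓖, IsConstructionScheme τ (X : Set Ordinal) 𝓕 →
      IsConstructionScheme τ (X : Set Ordinal) 𝓖 → 𝓕 = 𝓖) := by
  constructor
  · constructor
    · rintro ⟨𝓕, h𝓕⟩
      exact h𝓕.card_mem X (X_mem_scheme h𝓕)
    · rintro ⟨k, hk⟩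
      exact ⟨canon τ k X, canon_scheme hk⟩
  · intro 𝓕 𝓖 h𝓕 h𝓖
    obtain ⟨k, hk⟩ := h𝓕.card_mem X (X_mem_scheme h𝓕)
    rw [scheme_eq_canon k X 𝓕 hk h𝓕, scheme_eq_canon k X 𝓖 hk h𝓖]
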